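/- Let G be a finite simple graph in which every vertex has degree 2 or 3, and suppose G has a bridge e = {u, v} such that both components of G − e contain a vertex of degree 3. Then for the mixed graph (V(G), E(G), ∅) (no arcs), the full vertex set V(G) admits no partition of the doubled arc set into safe directed paths and cycles; concretely, after replacing every edge by two opposite arcs, every partition of the arcs into directed cycles contains a cycle traversing both arcs arising from e, i.e., a directed 2-cycle on {u, v} using only doubled-edge arcs, which is forbidden. -/

import Mathlib

open SimpleGraph in
private lemma stmt_19_parity {V : Type*} [DecidableEq V] (G : SimpleGraph V) (u v : V)
    (p : V → Bool) (huv : p u = true ∧ p v = false)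
    (hsame : ∀ a x : V, G.Adj a x → s(a, x) ≠ s(u, v) → p a = p x)
    {a b : V} (w : G.Walk a b) :
    (p a = p b) ↔ Even ((w.darts.map Dart.toProd).count (u, v) +
      (w.darts.map Dart.toProd).count (v, u)) := by
  obtain ⟨hpu, hpv⟩ := huv
  have hne : u ≠ v := by
    intro h; rw [h] at hpu; rw [hpu] at hpv; exact Bool.noConfusion hpv
  induction w with
  | nil => simp
  | @cons a x bb h q ih =>
    simp only [Walk.darts_cons, List.map_cons, List.count_cons, beq_iff_eq,
      Nat.even_iff] at ih ⊢
    by_cases h1 : ((a, x) : V × V) = (u, v)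
    · have ha : a = u := congrArg Prod.fst h1
      have hx : x = v := congrArg Prod.snd h1
      have h2 : ((a, x) : V × V) ≠ (v, u) := by
        intro hc
        exact hne (ha.symm.trans (congrArg Prod.fst hc))
      have hpa : p a = true := by rw [ha]; exact hpu
      have hpx : p x = false := by rw [hx]; exact hpv
      rw [if_pos h1, if_neg h2, hpa]
      rw [hpx] at ih
      rcases hb : p bb with _ | _ <;> simp only [hb] at ih ⊢ <;> simp at ih ⊢ <;> omega
    · by_cases h2 : ((a, x) : V × V) = (v, u)
      · have ha : a = v := congrArg Prod.fst h2
        have hx : x = u := congrArg Prod.snd h2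
        have hpa : p a = false := by rw [ha]; exact hpv
        have hpx : p x = true := by rw [hx]; exact hpu
        rw [if_neg h1, if_pos h2, hpa]
        rw [hpx] at ih
        rcases hb : p bb with _ | _ <;> simp only [hb] at ih ⊢ <;> simp at ih ⊢ <;> omega
      · have hne2 : s(a, x) ≠ s(u, v) := by
          intro hc
          rcases (Sym2.eq_iff).1 hc with ⟨rfl, rfl⟩ | ⟨rfl, rfl⟩
          · exact h1 rfl
          · exact h2 rfl
        rw [if_neg h1, if_neg h2, hsame a x h hne2]
        simpa using ih

theorem stmt_19 {V : Type*} [Fintype V] [DecidableEq V]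
    (G : SimpleGraph V) [DecidableRel G.Adj]
    (hdeg : ∀ w, G.degree w = 2 ∨ G.degree w = 3)
    (u v : V) (hadj : G.Adj u v)
    (hbridge : G.IsBridge s(u, v))
    (hdeg3u : ∃ x, (G.deleteEdges {s(u, v)}).Reachable u x ∧ G.degree x = 3)
    (hdeg3v : ∃ y, (G.deleteEdges {s(u, v)}).Reachable v y ∧ G.degree y = 3)
    (ι : Type*) [Fintype ι] (b : ι → V) (c : ∀ i, G.Walk (b i) (b i))
    (hcyc : ∀ i, (c i).support.tail.Nodup ∧ 0 < (c i).length)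
    (hpart : ∀ x y : V, G.Adj x y →
      (∑ i, ((c i).darts.map SimpleGraph.Dart.toProd).count (x, y)) = 1) :
    ∃ i, (u, v) ∈ (c i).darts.map SimpleGraph.Dart.toProd ∧
         (v, u) ∈ (c i).darts.map SimpleGraph.Dart.toProd := by
  classical
  set H := G.deleteEdges {s(u, v)} with hH
  let p : V → Bool := fun x => decide (H.Reachable u x)
  have hpu : p u = true := decide_eq_true (SimpleGraph.Reachable.refl u)
  have hpv : p v = false := by
    have hnr : ¬ H.Reachable u v := by
      have := SimpleGraph.isBridge_iff.1 hbridge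
      exact this
    simpa [p] using hnr
  have hsame : ∀ a x : V, G.Adj a x → s(a, x) ≠ s(u, v) → p a = p x := by
    intro a x hax hne
    have hHadj : H.Adj a x := by
      rw [hH, SimpleGraph.deleteEdges_adj]
      exact ⟨hax, by simpa using hne⟩
    have : H.Reachable u a ↔ H.Reachable u x :=
      ⟨fun h => h.trans hHadj.reachable, fun h => h.trans hHadj.symm.reachable⟩
    simp only [p, decide_eq_decide]
    exact this
  -- find a cycle containing (u, v)
  have hsum := hpart u v hadj
  have hex : ∃ i, ((c i).darts.map SimpleGraph.Dart.toProd).count (u, v) ≠ 0 := by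
    by_contra hc
    push_neg at hc
    rw [Finset.sum_eq_zero (fun i _ => hc i)] at hsum
    exact one_ne_zero hsum.symm
  obtain ⟨i, hi⟩ := hex
  refine ⟨i, List.count_pos_iff.1 (Nat.pos_of_ne_zero hi), ?_⟩
  have hcount1 : ((c i).darts.map SimpleGraph.Dart.toProd).count (u, v) = 1 := by
    have hle : ((c i).darts.map SimpleGraph.Dart.toProd).count (u, v) ≤ 1 := by
      rw [← hsum]
      exact Finset.single_le_sum (f := fun j => ((c j).darts.map SimpleGraph.Dart.toProd).count (u, v)) (fun j _ => Nat.zero_le _) (Finset.mem_univ i)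
    omega
  have heven := (stmt_19_parity G u v p ⟨hpu, hpv⟩ hsame (c i)).1 rfl
  rw [hcount1] at heven
  have : ((c i).darts.map SimpleGraph.Dart.toProd).count (v, u) ≠ 0 := by
    intro hz
    rw [hz] at heven
    simpa using heven
  exact List.count_pos_iff.1 (Nat.pos_of_ne_zero this)
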